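/- Let γ₁, γ₂ ∈ ℂ and let S = ℤ →₀ ℂ with standard basis {W_m | m ∈ ℤ}. Let ∘₁ and ∘₂ be the ℂ-bilinear operations on S determined by W_n ∘₁ W_m = −(γ₁ + m + 2n)·W_{m+n} and W_n ∘₂ W_m = −(γ₂ + m + 2n)·W_{m+n}. Then there exists a ℂ-linear bijection T : S → S with T(x ∘₁ y) = T(x) ∘₂ T(y) for all x,y ∈ S if and only if γ₁ = γ₂ or γ₁ = −γ₂. -/

import Mathlib

/-- The standard basis vector at `m` in `ℤ →₀ ℂ`. -/
noncomputable def W (m : ℤ) : ℤ →₀ ℂ := Finsupp.single m 1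

lemma W_ne (m : ℤ) : W m ≠ 0 := by
  intro h; exact one_ne_zero (Finsupp.single_eq_zero.mp h)

lemma single_eq_smul_W (k : ℤ) (a : ℂ) : Finsupp.single k a = a • W k := by
  rw [W, Finsupp.smul_single, smul_eq_mul, mul_one]

lemma W_apply (q p : ℤ) : W q p = if q = p then 1 else 0 := Finsupp.single_apply

lemma bilin_apply (B : (ℤ →₀ ℂ) →ₗ[ℂ] (ℤ →₀ ℂ) →ₗ[ℂ] (ℤ →₀ ℂ)) (x y : ℤ →₀ ℂ) :
    B x y = x.sum fun k a => y.sum fun j c => (a * c) • B (W k) (W j) := by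
  conv_lhs => rw [← Finsupp.sum_single x]
  rw [map_finsuppSum B, LinearMap.finsupp_sum_apply]
  refine Finsupp.sum_congr fun k _ => ?_
  conv_lhs => rw [← Finsupp.sum_single y]
  rw [map_finsuppSum]
  refine Finsupp.sum_congr fun j _ => ?_
  rw [single_eq_smul_W, single_eq_smul_W, map_smul, map_smul, LinearMap.smul_apply,
    smul_smul, mul_comm]

lemma bilin_ext (B₁ B₂ : (ℤ →₀ ℂ) →ₗ[ℂ] (ℤ →₀ ℂ) →ₗ[ℂ] (ℤ →₀ ℂ))
    (h : ∀ n m, B₁ (W n) (W m) = B₂ (W n) (W m)) : ∀ x y, B₁ x y = B₂ x y := by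
  intro x y
  rw [bilin_apply B₁, bilin_apply B₂]
  exact Finsupp.sum_congr fun k _ => Finsupp.sum_congr fun j _ => by rw [h]

lemma key_top (b : (ℤ →₀ ℂ) → (ℤ →₀ ℂ) → (ℤ →₀ ℂ))
    (hb : ∀ u v : ℤ →₀ ℂ, b u v =
      u.sum fun k a => v.sum fun j c => (a * c * ((j : ℂ) - (k : ℂ))) • W (j + k))
    (u v : ℤ →₀ ℂ) (m : ℂ) (huv : b u v = m • v) (hv : v ≠ 0)
    (K : ℤ) (hK : u K ≠ 0) (htop : ∀ k, K < k → u k = 0) (hKpos : 0 < K) :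
    ∀ p, K < p → v p = 0 := by
  have hs : v.support.Nonempty := Finsupp.support_nonempty_iff.mpr hv
  set J := v.support.max' hs with hJdef
  have hJmem : J ∈ v.support := v.support.max'_mem hs
  have hJ : v J ≠ 0 := Finsupp.mem_support_iff.mp hJmem
  have hle : ∀ j ∈ v.support, j ≤ J := fun j hj => Finset.le_max' _ _ hj
  have hub : ∀ k ∈ u.support, k ≤ K := by
    intro k hk
    by_contra h
    exact Finsupp.mem_support_iff.mp hk (htop k (by omega))
  have h0 : v (K + J) = 0 := by
    by_contra h
    have := hle _ (Finsupp.mem_support_iff.mpr h); omega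
  have heval := congrArg (fun z : ℤ →₀ ℂ => z (K + J)) huv
  rw [hb] at heval
  simp only [Finsupp.sum_apply, Finsupp.smul_apply, W_apply, smul_eq_mul,
    mul_ite, mul_one, mul_zero] at heval
  simp only [Finsupp.sum] at heval
  rw [Finset.sum_eq_single_of_mem K (Finsupp.mem_support_iff.mpr hK)] at heval
  · rw [Finset.sum_eq_single_of_mem J hJmem] at heval
    · have hpos : J + K = K + J := by omega
      rw [if_pos hpos] at heval
      have hz : u K * v J * ((J : ℂ) - K) = 0 := by
        rw [heval, h0, mul_zero]
      have hJK : (J : ℂ) - K = 0 := by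
        rcases mul_eq_zero.mp hz with h' | h'
        · exact absurd h' (mul_ne_zero hK hJ)
        · exact h'
      have hJKint : J = K := by exact_mod_cast sub_eq_zero.mp hJK
      intro p hp
      by_contra h
      have := hle _ (Finsupp.mem_support_iff.mpr h); omega
    · intro j hj hne
      have h' : j + K ≠ K + J := by have := hle _ hj; omega
      simp [h']
  · intro k hk hne
    apply Finset.sum_eq_zero
    intro j hj
    have h' : j + k ≠ K + J := by have := hle _ hj; have := hub _ hk; omega
    simp [h']

lemma key_bot (b : (ℤ →₀ ℂ) → (ℤ →₀ ℂ) → (ℤ →₀ ℂ))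
    (hb : ∀ u v : ℤ →₀ ℂ, b u v =
      u.sum fun k a => v.sum fun j c => (a * c * ((j : ℂ) - (k : ℂ))) • W (j + k))
    (u v : ℤ →₀ ℂ) (m : ℂ) (huv : b u v = m • v) (hv : v ≠ 0)
    (K : ℤ) (hK : u K ≠ 0) (hbot : ∀ k, k < K → u k = 0) (hKneg : K < 0) :
    ∀ p, p < K → v p = 0 := by
  have hs : v.support.Nonempty := Finsupp.support_nonempty_iff.mpr hv
  set J := v.support.min' hs with hJdef
  have hJmem : J ∈ v.support := v.support.min'_mem hs
  have hJ : v J ≠ 0 := Finsupp.mem_support_iff.mp hJmem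
  have hle : ∀ j ∈ v.support, J ≤ j := fun j hj => Finset.min'_le _ _ hj
  have hub : ∀ k ∈ u.support, K ≤ k := by
    intro k hk
    by_contra h
    exact Finsupp.mem_support_iff.mp hk (hbot k (by omega))
  have h0 : v (K + J) = 0 := by
    by_contra h
    have := hle _ (Finsupp.mem_support_iff.mpr h); omega
  have heval := congrArg (fun z : ℤ →₀ ℂ => z (K + J)) huv
  rw [hb] at heval
  simp only [Finsupp.sum_apply, Finsupp.smul_apply, W_apply, smul_eq_mul,
    mul_ite, mul_one, mul_zero] at heval
  simp only [Finsupp.sum] at heval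
  rw [Finset.sum_eq_single_of_mem K (Finsupp.mem_support_iff.mpr hK)] at heval
  · rw [Finset.sum_eq_single_of_mem J hJmem] at heval
    · have hpos : J + K = K + J := by omega
      rw [if_pos hpos] at heval
      have hz : u K * v J * ((J : ℂ) - K) = 0 := by
        rw [heval, h0, mul_zero]
      have hJK : (J : ℂ) - K = 0 := by
        rcases mul_eq_zero.mp hz with h' | h'
        · exact absurd h' (mul_ne_zero hK hJ)
        · exact h'
      have hJKint : J = K := by exact_mod_cast sub_eq_zero.mp hJK
      intro p hp
      by_contra h
      have := hle _ (Finsupp.mem_support_iff.mpr h); omega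
    · intro j hj hne
      have h' : j + K ≠ K + J := by have := hle _ hj; omega
      simp [h']
  · intro k hk hne
    apply Finset.sum_eq_zero
    intro j hj
    have h' : j + k ≠ K + J := by have := hle _ hj; have := hub _ hk; omega
    simp [h']

theorem stmt_17 (γ₁ γ₂ : ℂ)
    (mul₁ mul₂ : (ℤ →₀ ℂ) →ₗ[ℂ] (ℤ →₀ ℂ) →ₗ[ℂ] (ℤ →₀ ℂ))
    (h₁ : ∀ n m : ℤ, mul₁ (W n) (W m) = (-(γ₁ + (m : ℂ) + 2 * n)) • W (m + n))
    (h₂ : ∀ n m : ℤ, mul₂ (W n) (W m) = (-(γ₂ + (m : ℂ) + 2 * n)) • W (m + n)) :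
    (∃ T : (ℤ →₀ ℂ) ≃ₗ[ℂ] (ℤ →₀ ℂ),
        ∀ x y : ℤ →₀ ℂ, T (mul₁ x y) = mul₂ (T x) (T y)) ↔
    (γ₁ = γ₂ ∨ γ₁ = -γ₂) := by
  constructor
  · rintro ⟨T, hT⟩
    set u : ℤ → (ℤ →₀ ℂ) := fun m => T (W m) with hu
    have hune : ∀ m, u m ≠ 0 := by
      intro m h
      exact W_ne m (by simpa using (LinearEquiv.map_eq_zero_iff T).mp h)
    have hrel : ∀ n m : ℤ, mul₂ (u n) (u m) = (-(γ₁ + (m : ℂ) + 2 * n)) • u (m + n) := by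
      intro n m
      show mul₂ (T (W n)) (T (W m)) = _
      rw [← hT, h₁, map_smul]
    set b : (ℤ →₀ ℂ) → (ℤ →₀ ℂ) → (ℤ →₀ ℂ) := fun x y => mul₂ x y - mul₂ y x with hbdef
    have hb : ∀ x y : ℤ →₀ ℂ, b x y =
        x.sum fun k a => y.sum fun j c => (a * c * ((j : ℂ) - (k : ℂ))) • W (j + k) := by
      intro x y
      show mul₂ x y - mul₂ y x = _
      rw [bilin_apply mul₂ x y, bilin_apply mul₂ y x, Finsupp.sum_comm y x, ← Finsupp.sum_sub]
      refine Finsupp.sum_congr fun k _ => ?_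
      rw [← Finsupp.sum_sub]
      refine Finsupp.sum_congr fun j _ => ?_
      rw [h₂ k j, h₂ j k, smul_smul, smul_smul, add_comm k j, ← sub_smul]
      congr 1
      ring
    have hb0 : ∀ m : ℤ, b (u 0) (u m) = (m : ℂ) • u m := by
      intro m
      show mul₂ (u 0) (u m) - mul₂ (u m) (u 0) = _
      rw [hrel 0 m, hrel m 0]
      simp only [add_zero, zero_add]
      rw [← sub_smul]
      congr 1
      push_cast
      ring
    have hTx : ∀ x : ℤ →₀ ℂ, T x = x.sum fun m a => a • u m := by
      intro x
      conv_lhs => rw [← Finsupp.sum_single x]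
      rw [map_finsuppSum]
      exact Finsupp.sum_congr fun m _ => by rw [single_eq_smul_W, map_smul]
    have hsurj : ∀ q : ℤ, (∀ m, u m q = 0) → False := by
      intro q hq
      have h1 : T (T.symm (W q)) = W q := T.apply_symm_apply _
      rw [hTx] at h1
      have h2 := congrArg (fun z : ℤ →₀ ℂ => z q) h1
      simp only [Finsupp.sum_apply, Finsupp.smul_apply, smul_eq_mul] at h2
      rw [W_apply, if_pos rfl] at h2
      have h3 : ((T.symm (W q)).sum fun m a => a * u m q) = 0 := by
        rw [Finsupp.sum]
        exact Finset.sum_eq_zero fun m _ => by rw [hq m, mul_zero]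
      rw [h3] at h2
      exact one_ne_zero h2.symm
    -- support of u 0 is {0}
    have hUtop : ∀ k : ℤ, 0 < k → u 0 k = 0 := by
      by_contra h
      push_neg at h
      obtain ⟨k₀, hk₀pos, hk₀⟩ := h
      have hne : (u 0).support.Nonempty := ⟨k₀, Finsupp.mem_support_iff.mpr hk₀⟩
      set K := (u 0).support.max' hne with hKdef
      have hUK : u 0 K ≠ 0 := Finsupp.mem_support_iff.mp ((u 0).support.max'_mem hne)
      have hKpos : 0 < K :=
        lt_of_lt_of_le hk₀pos (Finset.le_max' _ _ (Finsupp.mem_support_iff.mpr hk₀))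
      have htop' : ∀ k, K < k → u 0 k = 0 := by
        intro k hk
        by_contra h'
        have := Finset.le_max' _ _ (Finsupp.mem_support_iff.mpr h')
        omega
      exact hsurj (K + 1) fun m =>
        key_top b hb (u 0) (u m) (m : ℂ) (hb0 m) (hune m) K hUK htop' hKpos (K + 1) (by omega)
    have hUbot : ∀ k : ℤ, k < 0 → u 0 k = 0 := by
      by_contra h
      push_neg at h
      obtain ⟨k₀, hk₀neg, hk₀⟩ := h
      have hne : (u 0).support.Nonempty := ⟨k₀, Finsupp.mem_support_iff.mpr hk₀⟩
      set K := (u 0).support.min' hne with hKdef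
      have hUK : u 0 K ≠ 0 := Finsupp.mem_support_iff.mp ((u 0).support.min'_mem hne)
      have hKneg : K < 0 :=
        lt_of_le_of_lt (Finset.min'_le _ _ (Finsupp.mem_support_iff.mpr hk₀)) hk₀neg
      have hbot' : ∀ k, k < K → u 0 k = 0 := by
        intro k hk
        by_contra h'
        have := Finset.min'_le _ _ (Finsupp.mem_support_iff.mpr h')
        omega
      exact hsurj (K - 1) fun m =>
        key_bot b hb (u 0) (u m) (m : ℂ) (hb0 m) (hune m) K hUK hbot' hKneg (K - 1) (by omega)
    set c : ℂ := u 0 0 with hcdef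
    have hUeq : u 0 = c • W 0 := by
      ext p
      rw [Finsupp.smul_apply, W_apply, smul_eq_mul]
      rcases lt_trichotomy p 0 with h' | h' | h'
      · rw [hUbot p h', if_neg (by omega), mul_zero]
      · rw [h', if_pos rfl, mul_one]
      · rw [hUtop p h', if_neg (by omega), mul_zero]
    -- coefficient equation
    have hbW0 : ∀ (v : ℤ →₀ ℂ) (p : ℤ), (b (W 0) v) p = (p : ℂ) * v p := by
      intro v p
      rw [hb]
      rw [W, Finsupp.sum_single_index (by simp)]
      simp only [one_mul, Int.cast_zero, sub_zero, add_zero]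
      rw [Finsupp.sum_apply]
      simp only [Finsupp.smul_apply, W_apply, smul_eq_mul, mul_ite, mul_one, mul_zero]
      rw [Finsupp.sum]
      rw [Finset.sum_eq_single p]
      · rw [if_pos rfl]; ring
      · intro j hj hne
        rw [if_neg hne]
      · intro hp
        simp [Finsupp.notMem_support_iff.mp hp]
    have hcoef : ∀ (m p : ℤ), c * ((p : ℂ) * u m p) = (m : ℂ) * u m p := by
      intro m p
      have e := hb0 m
      rw [hUeq] at e
      have hsm : b (c • W 0) (u m) = c • b (W 0) (u m) := by
        show mul₂ (c • W 0) (u m) - mul₂ (u m) (c • W 0) =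
          c • (mul₂ (W 0) (u m) - mul₂ (u m) (W 0))
        rw [map_smul, LinearMap.smul_apply, map_smul, smul_sub]
      rw [hsm] at e
      have e2 := congrArg (fun z : ℤ →₀ ℂ => z p) e
      simp only [Finsupp.smul_apply, smul_eq_mul] at e2
      rw [hbW0] at e2
      exact e2
    obtain ⟨p₁, hp₁⟩ : ∃ p, u 1 p ≠ 0 := by
      by_contra h
      push_neg at h
      exact hune 1 (Finsupp.ext h)
    have hc1 : c * (p₁ : ℂ) = 1 := by
      have e := hcoef 1 p₁
      have e2 : (c * (p₁ : ℂ)) * u 1 p₁ = 1 * u 1 p₁ := by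
        push_cast at e ⊢
        linear_combination e
      exact mul_right_cancel₀ hp₁ e2
    have hcne : c ≠ 0 := by
      intro h
      rw [h, zero_mul] at hc1
      exact zero_ne_one hc1
    have hp₁ne : (p₁ : ℂ) ≠ 0 := by
      intro h
      rw [h, mul_zero] at hc1
      exact zero_ne_one hc1
    have hmp : ∀ m p : ℤ, u m p ≠ 0 → p = m * p₁ := by
      intro m p hp
      have e := hcoef m p
      rw [← mul_assoc] at e
      have h1 : c * (p : ℂ) = m := mul_right_cancel₀ hp e
      have h2 : c * (p : ℂ) = c * ((m : ℂ) * p₁) := by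
        rw [h1]
        linear_combination (-(m : ℂ)) * hc1
      have h3 : (p : ℂ) = (m : ℂ) * p₁ := mul_left_cancel₀ hcne h2
      exact_mod_cast h3
    have hp₁pm : p₁ = 1 ∨ p₁ = -1 := by
      by_contra h
      push_neg at h
      apply hsurj 1
      intro m
      by_contra h'
      have h1 := hmp m 1 h'
      have h1' : p₁ * m = 1 := by rw [mul_comm]; exact h1.symm
      have : IsUnit p₁ := IsUnit.of_mul_eq_one m h1'
      rcases Int.isUnit_iff.mp this with h'' | h''
      · exact h.1 h''
      · exact h.2 h''
    -- final computation
    have hA : mul₂ (u 0) (u 0) = (c * c) • mul₂ (W 0) (W 0) := by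
      rw [hUeq, map_smul mul₂, LinearMap.smul_apply, map_smul, smul_smul]
    have hfin := hrel 0 0
    rw [hA, h₂ 0 0] at hfin
    have hfin2 := congrArg (fun z : ℤ →₀ ℂ => z 0) hfin
    simp only [Finsupp.smul_apply, smul_eq_mul, W_apply, add_zero, zero_add,
      Int.cast_zero, mul_zero, if_pos, reduceIte, mul_one] at hfin2
    rw [← hcdef] at hfin2
    -- hfin2 : c * c * -γ₂ = -γ₁ * c  (roughly)
    have hγ : γ₁ = c * γ₂ := by
      apply mul_left_cancel₀ hcne
      linear_combination hfin2
    rcases hp₁pm with h' | h'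
    · left
      have : c = 1 := by
        rw [h'] at hc1
        simpa using hc1
      rw [hγ, this, one_mul]
    · right
      have : c = -1 := by
        rw [h'] at hc1
        push_cast at hc1
        linear_combination -hc1
      rw [hγ, this]
      ring
  · rintro (h | h)
    · subst h
      refine ⟨LinearEquiv.refl ℂ _, ?_⟩
      intro x y
      simp only [LinearEquiv.refl_apply]
      exact bilin_ext mul₁ mul₂ (fun n m => by rw [h₁, h₂]) x y
    · subst h
      refine ⟨(Finsupp.domLCongr (Equiv.neg ℤ)).trans (LinearEquiv.neg ℂ), ?_⟩
      set T := (Finsupp.domLCongr (Equiv.neg ℤ) :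
        (ℤ →₀ ℂ) ≃ₗ[ℂ] (ℤ →₀ ℂ)).trans (LinearEquiv.neg ℂ) with hTdef
      have hTW : ∀ m : ℤ, T (W m) = -W (-m) := by
        intro m
        show LinearEquiv.neg ℂ (Finsupp.domLCongr (Equiv.neg ℤ) (W m)) = _
        rw [W, Finsupp.domLCongr_single]
        simp [W, LinearEquiv.neg_apply, Equiv.neg_apply]
      intro x y
      have hbase : ∀ n m : ℤ, (mul₁.compr₂ (T : (ℤ →₀ ℂ) →ₗ[ℂ] (ℤ →₀ ℂ))) (W n) (W m) =
          ((mul₂.comp (T : (ℤ →₀ ℂ) →ₗ[ℂ] (ℤ →₀ ℂ))).compl₂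
            (T : (ℤ →₀ ℂ) →ₗ[ℂ] (ℤ →₀ ℂ))) (W n) (W m) := by
        intro n m
        simp only [LinearMap.compr₂_apply, LinearMap.compl₂_apply, LinearMap.comp_apply,
          LinearEquiv.coe_coe]
        rw [h₁, map_smul, hTW, hTW, hTW]
        simp only [map_neg, LinearMap.neg_apply, neg_neg]
        rw [h₂, smul_neg, ← neg_smul]
        have hidx : -m + -n = -(m + n) := by ring
        rw [hidx]
        congr 1
        push_cast
        ring
      have := bilin_ext _ _ hbase x y
      simpa only [LinearMap.compr₂_apply, LinearMap.compl₂_apply, LinearMap.comp_apply,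
        LinearEquiv.coe_coe] using this
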